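/- Let ν > 0 and let g : ℝ → ℝ be continuous with compact support. Define θ₀(y) = exp(−(1/(2ν)) ∫₀^y g(s) ds) and, for x ∈ ℝ and t > 0, u(x,t) = [∫_{-∞}^{∞} ((x−y)/t) e^{−(x−y)²/(4νt)} θ₀(y) dy] / [∫_{-∞}^{∞} e^{−(x−y)²/(4νt)} θ₀(y) dy]. Then ‖u(·,t)‖_{L²(ℝ)} = O(t^{−1/4}) as t → ∞; that is, there exist C > 0 and T > 0 such that for all t ≥ T, (∫_{-∞}^{∞} |u(x,t)|² dx)^{1/2} ≤ C t^{−1/4}. -/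

import Mathlib

open Set MeasureTheory Real


lemma hc_abs_le (b z : ℝ) (hb : 0 < b) :
    |z| * Real.exp (-b * z ^ 2) ≤ (Real.sqrt b)⁻¹ * Real.exp (-(b/2) * z ^ 2) := by
  have hsb : 0 < Real.sqrt b := Real.sqrt_pos.mpr hb
  have key : Real.sqrt b * |z| ≤ Real.exp ((b/2) * z ^ 2) := by
    have h1 : (Real.sqrt b * |z|) ^ 2 = b * z ^ 2 := by
      rw [mul_pow, Real.sq_sqrt hb.le, sq_abs]
    have h2 : (1 : ℝ) + (b/2) * z ^ 2 ≤ Real.exp ((b/2) * z ^ 2) := by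
      linarith [Real.add_one_le_exp ((b/2) * z ^ 2)]
    nlinarith [sq_nonneg (Real.sqrt b * |z| - 1), abs_nonneg z, hsb.le]
  have e1 : Real.exp (-b * z ^ 2) = Real.exp (-(b/2) * z ^ 2) / Real.exp ((b/2) * z ^ 2) := by
    rw [← Real.exp_sub]; ring_nf
  calc |z| * Real.exp (-b * z ^ 2)
      = |z| * (Real.exp (-(b/2) * z ^ 2) / Real.exp ((b/2) * z ^ 2)) := by rw [e1]
    _ ≤ (Real.sqrt b)⁻¹ * Real.exp (-(b/2) * z ^ 2) := by
        rw [inv_mul_eq_div, le_div_iff₀ hsb]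
        have := Real.exp_pos ((b/2) * z ^ 2)
        rw [div_eq_mul_inv]
        calc |z| * (Real.exp (-(b/2) * z ^ 2) * (Real.exp ((b/2) * z ^ 2))⁻¹) * Real.sqrt b
            = (Real.sqrt b * |z|) * (Real.exp ((b/2) * z ^ 2))⁻¹ * Real.exp (-(b/2) * z ^ 2) := by ring
          _ ≤ (Real.exp ((b/2) * z ^ 2)) * (Real.exp ((b/2) * z ^ 2))⁻¹ * Real.exp (-(b/2) * z ^ 2) := by
              gcongr
          _ = Real.exp (-(b/2) * z ^ 2) := by
              rw [mul_inv_cancel₀ this.ne', one_mul]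

lemma hc_int_abs (b : ℝ) (hb : 0 < b) :
    Integrable (fun z : ℝ => |z| * Real.exp (-b * z ^ 2)) := by
  have := (integrable_mul_exp_neg_mul_sq hb).abs
  refine this.congr (Filter.Eventually.of_forall fun z => ?_)
  simp only [abs_mul, abs_of_pos (Real.exp_pos _)]

lemma hc_odd_zero (b : ℝ) : ∫ z : ℝ, z * Real.exp (-b * z ^ 2) = 0 := by
  have h := integral_neg_eq_self (fun z : ℝ => z * Real.exp (-b * z ^ 2)) volume
  simp only [neg_sq, neg_mul] at h
  rw [integral_neg] at h
  have h2 : ∫ z : ℝ, z * Real.exp (-(b * z ^ 2)) = 0 := by linarith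
  simpa [neg_mul] using h2

lemma hc_gauss_shift (b x : ℝ) (hb : 0 < b) :
    ∫ y : ℝ, Real.exp (-b * (x - y) ^ 2) = Real.sqrt (π / b) := by
  rw [integral_sub_left_eq_self (fun z : ℝ => Real.exp (-b * z ^ 2)) volume x]
  exact integral_gaussian b

lemma hc_int_gauss_shift (b x : ℝ) (hb : 0 < b) :
    Integrable (fun y : ℝ => Real.exp (-b * (x - y) ^ 2)) :=
  (integrable_exp_neg_mul_sq hb).comp_sub_left x

lemma hc_int_lin_shift (b t x : ℝ) (hb : 0 < b) :
    Integrable (fun y : ℝ => ((x - y) / t) * Real.exp (-b * (x - y) ^ 2)) := by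
  have : Integrable (fun z : ℝ => (z / t) * Real.exp (-b * z ^ 2)) := by
    simpa [div_eq_mul_inv, mul_comm, mul_assoc, mul_left_comm] using
      (integrable_mul_exp_neg_mul_sq hb).mul_const t⁻¹
  exact this.comp_sub_left x
lemma hc_numer_bound (b t Mb R : ℝ) (hb : 0 < b) (ht : 0 < t) (hMb : 0 ≤ Mb)
    (θ : ℝ → ℝ) (hθc : Continuous θ) (hθbd : ∀ y, |θ y| ≤ Mb)
    (hconst : ∀ y, R ≤ y → θ y = θ R) (x : ℝ) :
    |∫ y : ℝ, ((x - y) / t) * Real.exp (-b * (x - y) ^ 2) * θ y| ≤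
      2 * Mb / t * (Real.sqrt b)⁻¹ * Real.exp (-(b/4) * (max (x - R) 0) ^ 2)
        * Real.sqrt (π / (b/4)) := by
  set a := θ R with ha
  set c := max (x - R) 0 with hcdef
  have hc0 : 0 ≤ c := le_max_right _ _
  have hb4 : 0 < b / 4 := by linarith
  have I_lin := hc_int_lin_shift b t x hb
  have I_full : Integrable (fun y : ℝ => ((x - y) / t) * Real.exp (-b * (x - y) ^ 2) * θ y) := by
    have := I_lin.bdd_mul hθc.aestronglyMeasurable
      (c := Mb) (Filter.Eventually.of_forall fun y => by simpa [Real.norm_eq_abs] using hθbd y)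
    exact this.congr (Filter.Eventually.of_forall fun y => by ring)
  have Ia : Integrable (fun y : ℝ => ((x - y) / t) * Real.exp (-b * (x - y) ^ 2) * a) :=
    I_lin.mul_const a
  have hzero : ∫ y : ℝ, ((x - y) / t) * Real.exp (-b * (x - y) ^ 2) * a = 0 := by
    have h1 : ∫ y : ℝ, ((x - y) / t) * Real.exp (-b * (x - y) ^ 2) * a
        = ∫ z : ℝ, (z / t) * Real.exp (-b * z ^ 2) * a :=
      integral_sub_left_eq_self (fun z : ℝ => (z / t) * Real.exp (-b * z ^ 2) * a) volume x
    rw [h1]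
    have h2 : ∀ z : ℝ, (z / t) * Real.exp (-b * z ^ 2) * a
        = (a / t) * (z * Real.exp (-b * z ^ 2)) := fun z => by ring
    simp_rw [h2]
    rw [integral_const_mul, hc_odd_zero b, mul_zero]
  have split : ∫ y : ℝ, ((x - y) / t) * Real.exp (-b * (x - y) ^ 2) * θ y
      = ∫ y : ℝ, ((x - y) / t) * Real.exp (-b * (x - y) ^ 2) * (θ y - a) := by
    rw [← sub_zero (∫ y : ℝ, ((x - y) / t) * Real.exp (-b * (x - y) ^ 2) * θ y), ← hzero,
      ← integral_sub I_full Ia]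
    congr 1; funext y; ring
  rw [split]
  have hBint : Integrable (fun y : ℝ =>
      2 * Mb / t * (Real.sqrt b)⁻¹ * Real.exp (-(b/4) * c ^ 2)
        * Real.exp (-(b/4) * (x - y) ^ 2)) :=
    (hc_int_gauss_shift (b/4) x hb4).const_mul _
  have hptwise : ∀ y : ℝ,
      ‖((x - y) / t) * Real.exp (-b * (x - y) ^ 2) * (θ y - a)‖ ≤
      2 * Mb / t * (Real.sqrt b)⁻¹ * Real.exp (-(b/4) * c ^ 2)
        * Real.exp (-(b/4) * (x - y) ^ 2) := by
    intro y
    rcases le_or_gt R y with hy | hy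
    · rw [hconst y hy]
      simp only [sub_self, mul_zero, norm_zero]
      positivity
    · have hwc : c ^ 2 ≤ (x - y) ^ 2 := by
        rcases le_or_gt (x - R) 0 with h0 | h0
        · have : c = 0 := max_eq_right h0
          rw [this]; simpa using sq_nonneg (x - y)
        · have hcx : c = x - R := max_eq_left h0.le
          nlinarith
      have hexp : Real.exp (-(b/2) * (x - y) ^ 2) ≤
          Real.exp (-(b/4) * c ^ 2) * Real.exp (-(b/4) * (x - y) ^ 2) := by
        rw [← Real.exp_add]
        apply Real.exp_le_exp.mpr
        nlinarith
      have habs : |θ y - a| ≤ 2 * Mb := by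
        have := hθbd y; have := hθbd R
        rw [abs_sub_le_iff]
        constructor <;> [skip; skip] <;>
          · have h1 := abs_le.mp (hθbd y); have h2 := abs_le.mp (hθbd R); linarith
      calc ‖((x - y) / t) * Real.exp (-b * (x - y) ^ 2) * (θ y - a)‖
          = (|x - y| / t) * Real.exp (-b * (x - y) ^ 2) * |θ y - a| := by
            simp [Real.norm_eq_abs, abs_mul, abs_div, abs_of_pos ht,
              abs_of_pos (Real.exp_pos _)]
        _ ≤ (|x - y| / t) * Real.exp (-b * (x - y) ^ 2) * (2 * Mb) := by
            have h1 : 0 ≤ (|x - y| / t) * Real.exp (-b * (x - y) ^ 2) := by positivity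
            exact mul_le_mul_of_nonneg_left habs h1
        _ = (2 * Mb / t) * (|x - y| * Real.exp (-b * (x - y) ^ 2)) := by ring
        _ ≤ (2 * Mb / t) * ((Real.sqrt b)⁻¹ * Real.exp (-(b/2) * (x - y) ^ 2)) := by
            have := hc_abs_le b (x - y) hb
            have h1 : 0 ≤ 2 * Mb / t := by positivity
            exact mul_le_mul_of_nonneg_left this h1
        _ ≤ (2 * Mb / t) * ((Real.sqrt b)⁻¹ *
              (Real.exp (-(b/4) * c ^ 2) * Real.exp (-(b/4) * (x - y) ^ 2))) := by
            have h1 : 0 ≤ (2 * Mb / t) * (Real.sqrt b)⁻¹ := by positivity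
            have h2 : 0 ≤ (Real.sqrt b)⁻¹ := by positivity
            have h3 : 0 ≤ 2 * Mb / t := by positivity
            nlinarith [Real.exp_pos (-(b/4) * c ^ 2), Real.exp_pos (-(b/4) * (x - y) ^ 2)]
        _ = 2 * Mb / t * (Real.sqrt b)⁻¹ * Real.exp (-(b/4) * c ^ 2)
              * Real.exp (-(b/4) * (x - y) ^ 2) := by ring
  have := norm_integral_le_of_norm_le hBint (Filter.Eventually.of_forall hptwise)
  rw [Real.norm_eq_abs] at this
  calc |∫ y : ℝ, ((x - y) / t) * Real.exp (-b * (x - y) ^ 2) * (θ y - a)| ≤ _ := this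
    _ = 2 * Mb / t * (Real.sqrt b)⁻¹ * Real.exp (-(b/4) * c ^ 2) * Real.sqrt (π / (b/4)) := by
        rw [integral_const_mul, hc_gauss_shift (b/4) x hb4]
lemma hc_denom_lower (b mlb Mb : ℝ) (hb : 0 < b) (θ : ℝ → ℝ) (hθc : Continuous θ)
    (hm : ∀ y, mlb ≤ θ y) (hθbd : ∀ y, |θ y| ≤ Mb) (x : ℝ) :
    mlb * Real.sqrt (π / b) ≤ ∫ y : ℝ, Real.exp (-b * (x - y) ^ 2) * θ y := by
  have I_e := hc_int_gauss_shift b x hb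
  have I_full : Integrable (fun y : ℝ => Real.exp (-b * (x - y) ^ 2) * θ y) := by
    have := I_e.bdd_mul hθc.aestronglyMeasurable
      (c := Mb) (Filter.Eventually.of_forall fun y => by simpa [Real.norm_eq_abs] using hθbd y)
    exact this.congr (Filter.Eventually.of_forall fun y => by ring)
  have h1 : ∫ y : ℝ, mlb * Real.exp (-b * (x - y) ^ 2) = mlb * Real.sqrt (π / b) := by
    rw [integral_const_mul, hc_gauss_shift b x hb]
  rw [← h1]
  refine integral_mono (I_e.const_mul mlb) I_full fun y => ?_
  have he : 0 < Real.exp (-b * (x - y) ^ 2) := Real.exp_pos _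
  calc mlb * Real.exp (-b * (x - y) ^ 2) ≤ θ y * Real.exp (-b * (x - y) ^ 2) :=
        mul_le_mul_of_nonneg_right (hm y) he.le
    _ = Real.exp (-b * (x - y) ^ 2) * θ y := by ring

/-- **L² decay.** For `ν > 0` and `g` continuous with compact support, the Hopf–Cole
solution satisfies `‖u(·,t)‖_{L²(ℝ)} = O(t^{-1/4})` as `t → ∞`. -/
theorem hopf_cole_solution_L2_decay
    (ν : ℝ) (hν : 0 < ν)
    (g : ℝ → ℝ) (hcont : Continuous g) (hsupp : HasCompactSupport g)
    (θ₀ : ℝ → ℝ)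
    (hθ₀ : ∀ y : ℝ, θ₀ y = Real.exp (-(1 / (2 * ν)) * ∫ s in (0:ℝ)..y, g s))
    (u : ℝ → ℝ → ℝ)
    (hu : ∀ x t : ℝ, 0 < t →
      u x t = (∫ y : ℝ, ((x - y) / t) * Real.exp (-(x - y) ^ 2 / (4 * ν * t)) * θ₀ y) /
              (∫ y : ℝ, Real.exp (-(x - y) ^ 2 / (4 * ν * t)) * θ₀ y)) :
    ∃ C T : ℝ, 0 < C ∧ 0 < T ∧ ∀ t : ℝ, T ≤ t →
      (∫ x : ℝ, |u x t| ^ 2) ^ ((1:ℝ)/2) ≤ C * t ^ (-(1:ℝ)/4) := by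
  -- support radius
  obtain ⟨r, hr⟩ : ∃ r : ℝ, tsupport g ⊆ Metric.closedBall 0 r :=
    hsupp.isBounded.subset_closedBall 0
  set R : ℝ := max r 0 + 1 with hRdef
  have hR1 : 1 ≤ R := by
    have := le_max_right r 0; simp only [hRdef]; linarith
  have hR0 : 0 < R := by linarith
  have hgz : ∀ y : ℝ, R ≤ |y| → g y = 0 := by
    intro y hy
    apply image_eq_zero_of_notMem_tsupport
    intro hmem
    have h1 := hr hmem
    rw [Metric.mem_closedBall, dist_zero_right, Real.norm_eq_abs] at h1
    have := le_max_left r 0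
    simp only [hRdef] at hy
    linarith
  -- integral of g and bounds for the primitive
  have gint : Integrable g := hcont.integrable_of_hasCompactSupport hsupp
  set I := ∫ x : ℝ, |g x| with hI
  have hI0 : 0 ≤ I := integral_nonneg fun x => abs_nonneg _
  have hFbd : ∀ y : ℝ, |∫ s in (0:ℝ)..y, g s| ≤ I := by
    have key : ∀ a c : ℝ, a ≤ c → |∫ s in a..c, g s| ≤ I := by
      intro a c hac
      calc |∫ s in a..c, g s| ≤ ∫ s in a..c, |g s| :=
            intervalIntegral.abs_integral_le_integral_abs hac
        _ = ∫ s in Ioc a c, |g s| := intervalIntegral.integral_of_le hac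
        _ ≤ I := setIntegral_le_integral gint.abs
            (Filter.Eventually.of_forall fun x => abs_nonneg _)
    intro y
    rcases le_or_gt 0 y with hy | hy
    · exact key 0 y hy
    · rw [intervalIntegral.integral_symm, abs_neg]
      exact key y 0 hy.le
  -- bounds on θ₀
  set L := 1 / (2 * ν) * I with hLdef
  have hL0 : 0 ≤ L := by positivity
  set m := Real.exp (-L) with hm
  set M := Real.exp L with hM
  have hm0 : 0 < m := Real.exp_pos _
  have hM0 : 0 < M := Real.exp_pos _
  have hθlow : ∀ y, m ≤ θ₀ y := by
    intro y
    rw [hθ₀ y, hm]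
    apply Real.exp_le_exp.mpr
    have h1 := abs_le.mp (hFbd y)
    have h2 : (0:ℝ) < 1 / (2 * ν) := by positivity
    rw [hLdef]
    nlinarith [h1.1, h1.2]
  have hθhigh : ∀ y, θ₀ y ≤ M := by
    intro y
    rw [hθ₀ y, hM]
    apply Real.exp_le_exp.mpr
    have h1 := abs_le.mp (hFbd y)
    have h2 : (0:ℝ) < 1 / (2 * ν) := by positivity
    rw [hLdef]
    nlinarith [h1.1, h1.2]
  have hθabs : ∀ y, |θ₀ y| ≤ M := fun y =>
    abs_le.mpr ⟨by have := hθlow y; have : (0:ℝ) < m := hm0; linarith [hθlow y, hm0.le],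
      hθhigh y⟩
  clear_value m M
  have θcont : Continuous θ₀ := by
    have hfe : θ₀ = fun y => Real.exp (-(1 / (2 * ν)) * ∫ s in (0:ℝ)..y, g s) := funext hθ₀
    rw [hfe]
    exact (continuous_const.mul
      (intervalIntegral.continuous_primitive (fun a b => hcont.intervalIntegrable a b) 0)).rexp
  -- θ₀ is eventually constant
  have hFconst : ∀ a y : ℝ, (∀ s ∈ Set.uIcc a y, g s = 0) →
      (∫ s in (0:ℝ)..y, g s) = ∫ s in (0:ℝ)..a, g s := by
    intro a y hz
    have hsplit : (∫ s in (0:ℝ)..a, g s) + ∫ s in a..y, g s = ∫ s in (0:ℝ)..y, g s :=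
      intervalIntegral.integral_add_adjacent_intervals (hcont.intervalIntegrable _ _)
        (hcont.intervalIntegrable _ _)
    have h0 : (∫ s in a..y, g s) = 0 := by
      have : EqOn g 0 (Set.uIcc a y) := fun s hs => hz s hs
      rw [intervalIntegral.integral_congr this]
      simp
    linarith
  have hconstR : ∀ y, R ≤ y → θ₀ y = θ₀ R := by
    intro y hy
    rw [hθ₀ y, hθ₀ R]
    congr 1
    rw [hFconst R y]
    intro s hs
    rw [Set.uIcc_of_le hy] at hs
    exact hgz s (le_trans hs.1 (le_abs_self s))
  have hconstL : ∀ y, y ≤ -R → θ₀ y = θ₀ (-R) := by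
    intro y hy
    rw [hθ₀ y, hθ₀ (-R)]
    congr 1
    rw [hFconst (-R) y]
    intro s hs
    rw [Set.uIcc_of_ge hy] at hs
    have hs2 : s ≤ -R := hs.2
    have : R ≤ |s| := by rw [abs_of_nonpos (by linarith)]; linarith
    exact hgz s this
  -- constants
  set A1 := Real.sqrt (4 * ν) with hA1
  set A2 := Real.sqrt (16 * π * ν) with hA2
  set A3 := Real.sqrt (4 * π * ν) with hA3
  set A4 := Real.sqrt (8 * π * ν) with hA4
  have hA1p : 0 < A1 := Real.sqrt_pos.mpr (by positivity)
  have hA2p : 0 < A2 := Real.sqrt_pos.mpr (by positivity)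
  have hA3p : 0 < A3 := Real.sqrt_pos.mpr (by positivity)
  have hA4p : 0 < A4 := Real.sqrt_pos.mpr (by positivity)
  set K1 := 2 * M * A1 * A2 / (m * A3) with hK1
  have hK1p : 0 < K1 := by positivity
  set C2 := K1 ^ 2 * (2 * R + 2 * A4) with hC2
  have hC2p : 0 < C2 := by positivity
  clear_value A1 A2 A3 A4 K1 C2
  refine ⟨max (Real.sqrt C2) 1, 1, lt_of_lt_of_le one_pos (le_max_right _ _), one_pos, ?_⟩
  intro t htT
  have ht0 : 0 < t := lt_of_lt_of_le one_pos htT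
  set s := Real.sqrt t with hs
  have hs1 : 1 ≤ s := by
    rw [hs, show (1:ℝ) = Real.sqrt 1 by rw [Real.sqrt_one]]
    exact Real.sqrt_le_sqrt htT
  have hs0 : 0 < s := lt_of_lt_of_le one_pos hs1
  have hss : s * s = t := Real.mul_self_sqrt ht0.le
  set b := (4 * ν * t)⁻¹ with hb
  have hb0 : 0 < b := by positivity
  have hb4 : 0 < b / 4 := by linarith
  have hb2 : 0 < b / 2 := by linarith
  clear_value s b
  -- rewrite u
  have hu' : ∀ x : ℝ, u x t =
      (∫ y : ℝ, ((x - y) / t) * Real.exp (-b * (x - y) ^ 2) * θ₀ y) /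
      (∫ y : ℝ, Real.exp (-b * (x - y) ^ 2) * θ₀ y) := by
    intro x
    rw [hu x t ht0]
    have hexp : ∀ z : ℝ, -z ^ 2 / (4 * ν * t) = -b * z ^ 2 := by
      intro z; rw [hb, div_eq_mul_inv]; ring
    simp_rw [hexp]
  -- sqrt computations
  have hsqrtb : (Real.sqrt b)⁻¹ = A1 * s := by
    rw [hb, Real.sqrt_inv, inv_inv, show 4 * ν * t = (4 * ν) * t by ring,
      Real.sqrt_mul (by positivity) t, ← hA1, ← hs]
  have hq4 : Real.sqrt (π / (b / 4)) = A2 * s := by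
    have he : π / (b / 4) = (16 * π * ν) * t := by
      rw [hb]; field_simp; ring
    rw [he, Real.sqrt_mul (by positivity) t, ← hA2, ← hs]
  have hq1 : Real.sqrt (π / b) = A3 * s := by
    have he : π / b = (4 * π * ν) * t := by
      rw [hb]; field_simp
    rw [he, Real.sqrt_mul (by positivity) t, ← hA3, ← hs]
  have hq2 : Real.sqrt (π / (b / 2)) = A4 * s := by
    have he : π / (b / 2) = (8 * π * ν) * t := by
      rw [hb]; field_simp; ring
    rw [he, Real.sqrt_mul (by positivity) t, ← hA4, ← hs]
  -- the |u| bound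
  set KK := 2 * M / t * (A1 * s) * (A2 * s) / (m * (A3 * s)) with hKK
  have hKKpos : 0 < KK := by positivity
  have hKKeq : KK = K1 / s := by
    rw [hKK, hK1, ← hss]; field_simp
  clear_value KK
  have hDlow : ∀ x : ℝ, m * (A3 * s) ≤ ∫ y : ℝ, Real.exp (-b * (x - y) ^ 2) * θ₀ y := by
    intro x
    have h := hc_denom_lower b m M hb0 θ₀ θcont hθlow hθabs x
    rwa [hq1] at h
  have hDpos : ∀ x : ℝ, 0 < ∫ y : ℝ, Real.exp (-b * (x - y) ^ 2) * θ₀ y := fun x =>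
    lt_of_lt_of_le (by positivity) (hDlow x)
  have hub1 : ∀ x : ℝ, |u x t| ≤ KK * Real.exp (-(b/4) * (max (x - R) 0) ^ 2) := by
    intro x
    rw [hu' x, abs_div, abs_of_pos (hDpos x)]
    have hnum := hc_numer_bound b t M R hb0 ht0 hM0.le θ₀ θcont hθabs hconstR x
    rw [hsqrtb, hq4] at hnum
    calc |∫ y : ℝ, ((x - y) / t) * Real.exp (-b * (x - y) ^ 2) * θ₀ y| /
          (∫ y : ℝ, Real.exp (-b * (x - y) ^ 2) * θ₀ y)
        ≤ (2 * M / t * (A1 * s) * Real.exp (-(b/4) * (max (x - R) 0) ^ 2) * (A2 * s)) /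
          (m * (A3 * s)) :=
          div_le_div₀ (by positivity) hnum (by positivity) (hDlow x)
      _ = KK * Real.exp (-(b/4) * (max (x - R) 0) ^ 2) := by rw [hKK]; ring
  have hub2 : ∀ x : ℝ, |u x t| ≤ KK * Real.exp (-(b/4) * (max (-x - R) 0) ^ 2) := by
    intro x
    rw [hu' x, abs_div, abs_of_pos (hDpos x)]
    have hmirror : (∫ y : ℝ, ((-x - y) / t) * Real.exp (-b * (-x - y) ^ 2) * θ₀ (-y))
        = - ∫ y : ℝ, ((x - y) / t) * Real.exp (-b * (x - y) ^ 2) * θ₀ y := by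
      rw [← integral_neg_eq_self
        (fun y : ℝ => ((-x - y) / t) * Real.exp (-b * (-x - y) ^ 2) * θ₀ (-y)) volume,
        ← integral_neg]
      congr 1; funext y
      simp only [neg_neg]
      rw [show (-x - -y) = -(x - y) by ring, neg_sq]
      ring
    have hθ'c : Continuous (fun y : ℝ => θ₀ (-y)) := θcont.comp continuous_neg
    have hθ'bd : ∀ y : ℝ, |θ₀ (-y)| ≤ M := fun y => hθabs (-y)
    have hθ'const : ∀ y : ℝ, R ≤ y → θ₀ (-y) = θ₀ (-R) := fun y hy =>
      hconstL (-y) (by linarith)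
    have hnum := hc_numer_bound b t M R hb0 ht0 hM0.le (fun y => θ₀ (-y)) hθ'c hθ'bd
      hθ'const (-x)
    rw [hsqrtb, hq4] at hnum
    have habs : |∫ y : ℝ, ((x - y) / t) * Real.exp (-b * (x - y) ^ 2) * θ₀ y|
        = |∫ y : ℝ, ((-x - y) / t) * Real.exp (-b * (-x - y) ^ 2) * θ₀ (-y)| := by
      rw [hmirror, abs_neg]
    rw [habs]
    calc |∫ y : ℝ, ((-x - y) / t) * Real.exp (-b * (-x - y) ^ 2) * θ₀ (-y)| /
          (∫ y : ℝ, Real.exp (-b * (x - y) ^ 2) * θ₀ y)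
        ≤ (2 * M / t * (A1 * s) * Real.exp (-(b/4) * (max (-x - R) 0) ^ 2) * (A2 * s)) /
          (m * (A3 * s)) :=
          div_le_div₀ (by positivity) hnum (by positivity) (hDlow x)
      _ = KK * Real.exp (-(b/4) * (max (-x - R) 0) ^ 2) := by rw [hKK]; ring
  -- squared pointwise domination
  set G := fun x : ℝ => Set.indicator (Icc (-R) R) (fun _ => (1:ℝ)) x
      + Real.exp (-(b/2) * (x - R) ^ 2) + Real.exp (-(b/2) * (x + R) ^ 2) with hG
  have hsq : ∀ (x c : ℝ), |u x t| ≤ KK * Real.exp (-(b/4) * c ^ 2) →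
      |u x t| ^ 2 ≤ KK ^ 2 * Real.exp (-(b/2) * c ^ 2) := by
    intro x c h
    have h2 := pow_le_pow_left₀ (abs_nonneg _) h 2
    calc |u x t| ^ 2 ≤ (KK * Real.exp (-(b/4) * c ^ 2)) ^ 2 := h2
      _ = KK ^ 2 * Real.exp (-(b/2) * c ^ 2) := by
          rw [mul_pow]
          congr 1
          rw [pow_two, ← Real.exp_add]
          congr 1
          ring
  have hdom : ∀ x : ℝ, |u x t| ^ 2 ≤ KK ^ 2 * G x := by
    intro x
    have hindnn : 0 ≤ Set.indicator (Icc (-R) R) (fun _ => (1:ℝ)) x :=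
      Set.indicator_nonneg (fun _ _ => zero_le_one) x
    by_cases hx1 : R < x
    · have hc : max (x - R) 0 = x - R := max_eq_left (by linarith)
      have h := hsq x (max (x - R) 0) (hub1 x)
      rw [hc] at h
      refine h.trans (mul_le_mul_of_nonneg_left ?_ (by positivity))
      have := Real.exp_pos (-(b/2) * (x + R) ^ 2)
      simp only [hG]
      linarith
    · by_cases hx2 : x < -R
      · have hc : max (-x - R) 0 = -x - R := max_eq_left (by linarith)
        have h := hsq x (max (-x - R) 0) (hub2 x)
        rw [hc, show (-x - R) ^ 2 = (x + R) ^ 2 by ring] at h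
        refine h.trans (mul_le_mul_of_nonneg_left ?_ (by positivity))
        have := Real.exp_pos (-(b/2) * (x - R) ^ 2)
        simp only [hG]
        linarith
      · push_neg at hx1 hx2
        have hc : max (x - R) 0 = 0 := max_eq_right (by linarith)
        have h := hsq x (max (x - R) 0) (hub1 x)
        rw [hc] at h
        simp only [ne_eq, OfNat.ofNat_ne_zero, not_false_eq_true, zero_pow, mul_zero,
          neg_zero, Real.exp_zero, mul_one] at h
        refine h.trans ?_
        have hmem : x ∈ Icc (-R) R := ⟨hx2, hx1⟩
        have hind : Set.indicator (Icc (-R) R) (fun _ => (1:ℝ)) x = 1 :=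
          Set.indicator_of_mem hmem _
        have hGx : (1:ℝ) ≤ G x := by
          have h1 := Real.exp_pos (-(b/2) * (x - R) ^ 2)
          have h2 := Real.exp_pos (-(b/2) * (x + R) ^ 2)
          simp only [hG]
          linarith
        have h3 : KK ^ 2 * 1 ≤ KK ^ 2 * G x :=
          mul_le_mul_of_nonneg_left hGx (by positivity)
        linarith
  -- integrate the domination
  have hGind : Integrable (fun x : ℝ => Set.indicator (Icc (-R) R) (fun _ => (1:ℝ)) x) := by
    rw [integrable_indicator_iff measurableSet_Icc]
    exact integrableOn_const measure_Icc_lt_top.ne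
  have hGe1 : Integrable (fun x : ℝ => Real.exp (-(b/2) * (x - R) ^ 2)) :=
    (integrable_exp_neg_mul_sq hb2).comp_sub_right R
  have hGe2 : Integrable (fun x : ℝ => Real.exp (-(b/2) * (x + R) ^ 2)) :=
    (integrable_exp_neg_mul_sq hb2).comp_add_right R
  have hGint : Integrable G := by
    rw [hG]; exact (hGind.add hGe1).add hGe2
  have hIind : ∫ x : ℝ, Set.indicator (Icc (-R) R) (fun _ => (1:ℝ)) x = 2 * R := by
    rw [integral_indicator measurableSet_Icc]
    simp only [integral_const, MeasurableSet.univ, Measure.restrict_apply, Set.univ_inter,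
      smul_eq_mul, mul_one, Real.volume_Icc]
    rw [measureReal_restrict_apply_univ, Real.volume_real_Icc, max_eq_left (by linarith)]
    ring
  have hIe1 : ∫ x : ℝ, Real.exp (-(b/2) * (x - R) ^ 2) = A4 * s := by
    rw [integral_sub_right_eq_self (fun z : ℝ => Real.exp (-(b/2) * z ^ 2)) R,
      integral_gaussian, hq2]
  have hIe2 : ∫ x : ℝ, Real.exp (-(b/2) * (x + R) ^ 2) = A4 * s := by
    rw [integral_add_right_eq_self (fun z : ℝ => Real.exp (-(b/2) * z ^ 2)) R,
      integral_gaussian, hq2]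
  have hInt : ∫ x : ℝ, |u x t| ^ 2 ≤ KK ^ 2 * (2 * R + A4 * s + A4 * s) := by
    have h1 := integral_mono_of_nonneg
      (Filter.Eventually.of_forall fun x => sq_nonneg |u x t|)
      (hGint.const_mul (KK ^ 2)) (Filter.Eventually.of_forall hdom)
    calc ∫ x : ℝ, |u x t| ^ 2 ≤ ∫ x : ℝ, KK ^ 2 * G x := h1
      _ = KK ^ 2 * ∫ x : ℝ, G x := integral_const_mul _ _
      _ = KK ^ 2 * (2 * R + A4 * s + A4 * s) := by
          have hGadd : Integrable (fun x : ℝ =>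
              Set.indicator (Icc (-R) R) (fun _ => (1:ℝ)) x
                + Real.exp (-(b/2) * (x - R) ^ 2)) := hGind.add hGe1
          have hIG : ∫ x : ℝ, G x = 2 * R + A4 * s + A4 * s := by
            simp only [hG]
            rw [integral_add hGadd hGe2, integral_add hGind hGe1, hIind, hIe1, hIe2]
          rw [hIG]
  have hfinal : ∫ x : ℝ, |u x t| ^ 2 ≤ C2 / s := by
    refine hInt.trans ?_
    rw [hKKeq, div_pow, hC2, div_mul_eq_mul_div, div_le_div_iff₀ (by positivity) hs0]
    have hkey : 0 ≤ K1 ^ 2 * s * (2 * R * (s - 1)) := by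
      apply mul_nonneg
      · apply mul_nonneg (sq_nonneg _) hs0.le
      · apply mul_nonneg (by linarith) (by linarith)
    have hsq2 : s ^ 2 = s * s := by ring
    linarith [hkey]
  -- conclude
  have hS0 : 0 ≤ ∫ x : ℝ, |u x t| ^ 2 := integral_nonneg fun x => sq_nonneg _
  have h1 : (∫ x : ℝ, |u x t| ^ 2) ^ ((1:ℝ)/2) ≤ (C2 / s) ^ ((1:ℝ)/2) :=
    Real.rpow_le_rpow hS0 hfinal (by norm_num)
  have h2 : (C2 / s) ^ ((1:ℝ)/2) = Real.sqrt C2 / Real.sqrt s := by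
    rw [← Real.sqrt_eq_rpow, Real.sqrt_div hC2p.le]
  have h3 : Real.sqrt s = t ^ ((1:ℝ)/4) := by
    rw [show ((1:ℝ)/4) = (1/2 : ℝ) * (1/2 : ℝ) by norm_num, Real.rpow_mul ht0.le,
      ← Real.sqrt_eq_rpow, ← Real.sqrt_eq_rpow, hs]
  have h4 : t ^ (-(1:ℝ)/4) = (t ^ ((1:ℝ)/4))⁻¹ := by
    rw [neg_div, Real.rpow_neg ht0.le]
  have hsspos : 0 < Real.sqrt s := Real.sqrt_pos.mpr hs0
  calc (∫ x : ℝ, |u x t| ^ 2) ^ ((1:ℝ)/2) ≤ (C2 / s) ^ ((1:ℝ)/2) := h1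
    _ = Real.sqrt C2 / Real.sqrt s := h2
    _ ≤ max (Real.sqrt C2) 1 / Real.sqrt s := by
        gcongr
        exact le_max_left _ _
    _ = max (Real.sqrt C2) 1 * t ^ (-(1:ℝ)/4) := by
        rw [h4, ← h3, div_eq_mul_inv]
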